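/- Let R be a commutative ring, and for a ∈ R let σ_a : R[ε] → R[ε] be the R-algebra endomorphism with σ_a(ε) = a·ε. Then a ↦ σ_a defines an action making the kernel of K^M_{n+1}(R[ε]) → K^M_{n+1}(R) into an R-module, provided R contains 1/2 and is weakly 5-fold stable; on generators it acts by a · {1 + s·r₁⋯r_n·ε, r₁, …, r_n} = {1 + a·s·r₁⋯r_n·ε, r₁, …, r_n}. -/

import Mathlib

open TrivSqZeroExt

/-- The relations defining the Milnor K-group of a commutative ring `S`:
multilinearity relations and Steinberg relations (a generator `r₁ ⊗ … ⊗ r_n` with some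
pair of consecutive entries summing to `1`). -/
def milnorRelSet (S : Type*) [CommRing S] (n : ℕ) : Set (FreeAbelianGroup (Fin n → Sˣ)) :=
  {x | ∃ (f : Fin n → Sˣ) (i : Fin n) (u v : Sˣ),
      x = FreeAbelianGroup.of (Function.update f i (u * v))
        - FreeAbelianGroup.of (Function.update f i u)
        - FreeAbelianGroup.of (Function.update f i v)} ∪
  {x | ∃ (f : Fin n → Sˣ) (i j : Fin n), (i : ℕ) + 1 = (j : ℕ) ∧
      ((f i : S) + (f j : S) = 1) ∧ x = FreeAbelianGroup.of f}

/-- The `n`-th Milnor K-group of a commutative ring `S`: the quotient of `(Sˣ)^{⊗ n}`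
(presented as the free abelian group on `n`-tuples of units, modulo multilinearity)
by the Steinberg relations. -/
def MilnorK (S : Type*) [CommRing S] (n : ℕ) : Type _ :=
  FreeAbelianGroup (Fin n → Sˣ) ⧸ AddSubgroup.closure (milnorRelSet S n)

instance (S : Type*) [CommRing S] (n : ℕ) : AddCommGroup (MilnorK S n) :=
  QuotientAddGroup.Quotient.addCommGroup _

/-- The Milnor symbol `{r₁, …, r_n}`. -/
def milnorSymbol {S : Type*} [CommRing S] {n : ℕ} (f : Fin n → Sˣ) : MilnorK S n :=
  QuotientAddGroup.mk (FreeAbelianGroup.of f)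

/-- Functoriality of Milnor K-groups in ring homomorphisms. -/
def MilnorK.map {S T : Type*} [CommRing S] [CommRing T] (φ : S →+* T) (n : ℕ) :
    MilnorK S n →+ MilnorK T n := by
  refine QuotientAddGroup.lift _
    ((QuotientAddGroup.mk' (AddSubgroup.closure (milnorRelSet T n))).comp
      (FreeAbelianGroup.map (fun f => (Units.map (φ : S →* T)) ∘ f))) ?_
  intro x hx
  revert x hx
  rw [← SetLike.le_def, AddSubgroup.closure_le]
  rintro x (⟨f, i, u, v, rfl⟩ | ⟨f, i, j, hij, hsum, rfl⟩) <;>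
    simp only [SetLike.mem_coe, AddMonoidHom.mem_ker, map_sub]
  · show milnorSymbol (Units.map (φ : S →* T) ∘ Function.update f i (u * v))
      - milnorSymbol (Units.map (φ : S →* T) ∘ Function.update f i u)
      - milnorSymbol (Units.map (φ : S →* T) ∘ Function.update f i v) = (0 : MilnorK T n)
    show (QuotientAddGroup.mk (FreeAbelianGroup.of (Units.map (φ : S →* T) ∘ Function.update f i (u * v))
      - FreeAbelianGroup.of (Units.map (φ : S →* T) ∘ Function.update f i u)
      - FreeAbelianGroup.of (Units.map (φ : S →* T) ∘ Function.update f i v)) :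
        FreeAbelianGroup (Fin n → Tˣ) ⧸ AddSubgroup.closure (milnorRelSet T n)) = 0
    rw [QuotientAddGroup.eq_zero_iff]
    refine AddSubgroup.subset_closure (Or.inl ⟨Units.map (φ : S →* T) ∘ f, i,
      Units.map (φ : S →* T) u, Units.map (φ : S →* T) v, ?_⟩)
    simp [Function.comp_update]
  · show milnorSymbol (Units.map (φ : S →* T) ∘ f) = (0 : MilnorK T n)
    show (QuotientAddGroup.mk (FreeAbelianGroup.of (Units.map (φ : S →* T) ∘ f)) :
        FreeAbelianGroup (Fin n → Tˣ) ⧸ AddSubgroup.closure (milnorRelSet T n)) = 0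
    rw [QuotientAddGroup.eq_zero_iff]
    refine AddSubgroup.subset_closure (Or.inr ⟨Units.map (φ : S →* T) ∘ f, i, j, hij, ?_, rfl⟩)
    simp only [Function.comp_apply, Units.coe_map, MonoidHom.coe_coe]
    rw [← map_add, hsum, map_one]

/-- The unit `1 + r·ε` of the dual numbers, with inverse `1 - r·ε`. -/
def oneAddEps (R : Type*) [CommRing R] (r : R) : (DualNumber R)ˣ where
  val := 1 + inr r
  inv := 1 - inr r
  val_inv := by
    have h : (inr r : DualNumber R) * inr r = 0 := inr_mul_inr R r r
    ring_nf
    simp [pow_two, h]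
  inv_val := by
    have h : (inr r : DualNumber R) * inr r = 0 := inr_mul_inr R r r
    ring_nf
    simp [pow_two, h]

/-- The `R`-algebra endomorphism `σ_a` of the dual numbers sending `ε` to `a·ε`. -/
def epsScale (R : Type*) [CommRing R] (a : R) : DualNumber R →+* DualNumber R where
  toFun x := inl x.fst + inr (a * x.snd)
  map_one' := by simp
  map_mul' x y := by
    ext
    · simp
    · simp [snd_mul, smul_eq_mul, mul_comm, mul_add]
      ring
  map_zero' := by simp
  map_add' x y := by ext <;> simp [mul_add]

/-- A commutative ring `R` is weakly `k`-fold stable if for any `k - 1` elements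
there is a unit `r` such that adding `r` to each of them yields a unit. -/
def WeaklyStable (R : Type*) [CommRing R] (k : ℕ) : Prop :=
  ∀ r : Fin (k - 1) → R, ∃ u : Rˣ, ∀ i, IsUnit (r i + (u : R))

section Basic

variable {R : Type*} [CommRing R] {m : ℕ}

/-- Constant unit in the dual numbers. -/
def cU (c : Rˣ) : (DualNumber R)ˣ := Units.map (algebraMap R (DualNumber R)).toMonoidHom c

@[simp] lemma cU_val (c : Rˣ) : ((cU c : (DualNumber R)ˣ) : DualNumber R) = inl (c : R) := rfl

@[simp] lemma cU_mul (c d : Rˣ) : (cU (c * d) : (DualNumber R)ˣ) = cU c * cU d := by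
  simp [cU]

@[simp] lemma oneAddEps_val (t : R) : ((oneAddEps R t : (DualNumber R)ˣ) : DualNumber R)
    = 1 + inr t := rfl

lemma oneAddEps_mul (s t : R) : oneAddEps R s * oneAddEps R t = oneAddEps R (s + t) :=
  Units.ext (by
    show (1 + inr s) * (1 + inr t) = 1 + inr (s + t)
    have h : (inr s : DualNumber R) * inr t = 0 := inr_mul_inr R s t
    rw [mul_add, mul_one, add_mul, one_mul, h, add_zero, inr_add, add_assoc])

@[simp] lemma oneAddEps_zero : oneAddEps R (0 : R) = 1 :=
  Units.ext (by show (1 : DualNumber R) + inr 0 = 1; simp)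

lemma cU_mul_oneAddEps_val (c : Rˣ) (t : R) :
    ((cU c * oneAddEps R t : (DualNumber R)ˣ) : DualNumber R)
      = inl (c : R) + inr ((c : R) * t) := by
  show (inl (c : R) : DualNumber R) * (1 + inr t) = _
  rw [mul_add, mul_one, inl_mul_inr]
  simp [smul_eq_mul]

lemma symbol_rel_mul (f : Fin m → (DualNumber R)ˣ) (i : Fin m) (u v : (DualNumber R)ˣ) :
    milnorSymbol (Function.update f i (u * v))
      = milnorSymbol (Function.update f i u) + milnorSymbol (Function.update f i v) := by
  have h0 : (QuotientAddGroup.mk (FreeAbelianGroup.of (Function.update f i (u * v))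
      - FreeAbelianGroup.of (Function.update f i u)
      - FreeAbelianGroup.of (Function.update f i v)) :
        MilnorK (DualNumber R) m) = 0 :=
    (QuotientAddGroup.eq_zero_iff _).mpr
      (AddSubgroup.subset_closure (Or.inl ⟨f, i, u, v, rfl⟩))
  rw [QuotientAddGroup.mk_sub, QuotientAddGroup.mk_sub, sub_sub, sub_eq_zero] at h0
  exact h0

lemma symbol_steinberg {f : Fin m → (DualNumber R)ˣ} {i j : Fin m}
    (hij : (i : ℕ) + 1 = (j : ℕ)) (hsum : ((f i : DualNumber R)) + (f j : DualNumber R) = 1) :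
    milnorSymbol f = 0 := by
  unfold milnorSymbol
  exact (QuotientAddGroup.eq_zero_iff _).mpr
    (AddSubgroup.subset_closure (Or.inr ⟨f, i, j, hij, hsum, rfl⟩))

lemma symbol_one {f : Fin m → (DualNumber R)ˣ} {i : Fin m} (h : f i = 1) :
    milnorSymbol f = 0 := by
  have h2 : Function.update f i (1 : (DualNumber R)ˣ) = f := by
    rw [← h]; exact Function.update_eq_self i f
  have := symbol_rel_mul f i 1 1
  rw [one_mul, h2] at this
  exact (left_eq_add.mp this)

/-- Additivity of a symbol in a `oneAddEps` slot. -/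
lemma symbol_E_add (f : Fin m → (DualNumber R)ˣ) (i : Fin m) (s t : R) :
    milnorSymbol (Function.update f i (oneAddEps R (s + t)))
      = milnorSymbol (Function.update f i (oneAddEps R s))
        + milnorSymbol (Function.update f i (oneAddEps R t)) := by
  rw [← oneAddEps_mul]; exact symbol_rel_mul f i _ _

end Basic
section TwoSlot

variable {R : Type*} [CommRing R] {m : ℕ}

/-- Symbol with slots `i`, `j` set to `u`, `v`. -/
def gsym (f : Fin m → (DualNumber R)ˣ) (i j : Fin m) (u v : (DualNumber R)ˣ) :
    MilnorK (DualNumber R) m :=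
  milnorSymbol (Function.update (Function.update f i u) j v)

variable {f : Fin m → (DualNumber R)ˣ} {i j : Fin m}

lemma ne_of_succ (hij : (i : ℕ) + 1 = (j : ℕ)) : i ≠ j := by
  intro h; subst h; omega

lemma gsym_mul_left (hij : (i : ℕ) + 1 = (j : ℕ)) (u u' v : (DualNumber R)ˣ) :
    gsym f i j (u * u') v = gsym f i j u v + gsym f i j u' v := by
  have hne := ne_of_succ hij
  unfold gsym
  rw [Function.update_comm hne (u * u') v f, Function.update_comm hne u v f,
    Function.update_comm hne u' v f]
  exact symbol_rel_mul _ i _ _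

lemma gsym_mul_right (hij : (i : ℕ) + 1 = (j : ℕ)) (u v v' : (DualNumber R)ˣ) :
    gsym f i j u (v * v') = gsym f i j u v + gsym f i j u v' :=
  symbol_rel_mul _ j _ _

lemma gsym_steinberg (hij : (i : ℕ) + 1 = (j : ℕ)) {u v : (DualNumber R)ˣ}
    (hsum : (u : DualNumber R) + (v : DualNumber R) = 1) :
    gsym f i j u v = 0 := by
  have hne := ne_of_succ hij
  refine symbol_steinberg hij ?_
  rw [Function.update_self, Function.update_of_ne hne, Function.update_self]
  exact hsum

lemma gsym_E_add_left (hij : (i : ℕ) + 1 = (j : ℕ)) (s t : R) (v : (DualNumber R)ˣ) :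
    gsym f i j (oneAddEps R (s + t)) v
      = gsym f i j (oneAddEps R s) v + gsym f i j (oneAddEps R t) v := by
  rw [← oneAddEps_mul]; exact gsym_mul_left hij _ _ _

lemma gsym_E_add_right (hij : (i : ℕ) + 1 = (j : ℕ)) (u : (DualNumber R)ˣ) (s t : R) :
    gsym f i j u (oneAddEps R (s + t))
      = gsym f i j u (oneAddEps R s) + gsym f i j u (oneAddEps R t) := by
  rw [← oneAddEps_mul]; exact gsym_mul_right hij _ _ _

lemma gsym_E_zero_right (u : (DualNumber R)ˣ) :
    gsym f i j u (oneAddEps R (0 : R)) = 0 := by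
  refine symbol_one (i := j) ?_
  rw [Function.update_self, oneAddEps_zero]

lemma gsym_E_neg_right (hij : (i : ℕ) + 1 = (j : ℕ)) (u : (DualNumber R)ˣ) (t : R) :
    gsym f i j u (oneAddEps R (-t)) = -gsym f i j u (oneAddEps R t) := by
  have h := gsym_E_add_right (f := f) hij u t (-t)
  rw [add_neg_cancel, gsym_E_zero_right] at h
  exact eq_neg_of_add_eq_zero_right h.symm

lemma gsym_E_neg_left (hij : (i : ℕ) + 1 = (j : ℕ)) (t : R) (u : (DualNumber R)ˣ) :
    gsym f i j (oneAddEps R (-t)) u = -gsym f i j (oneAddEps R t) u := by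
  have h := gsym_E_add_left (f := f) hij t (-t) u
  rw [add_neg_cancel] at h
  have h0 : gsym f i j (oneAddEps R (0 : R)) u = 0 := by
    refine symbol_one (i := i) ?_
    rw [Function.update_of_ne (ne_of_succ hij), Function.update_self, oneAddEps_zero]
  rw [h0] at h
  exact eq_neg_of_add_eq_zero_right h.symm

/-- The fundamental relation from the Steinberg relation `{c(1+αε), d(1+βε)}` with
`c + d = 1`, `cα + dβ = 0`. -/
lemma gA (hij : (i : ℕ) + 1 = (j : ℕ)) (c d : Rˣ) (hcd : (c : R) + (d : R) = 1) (α : R) :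
    gsym f i j (cU c) (oneAddEps R (-((d⁻¹ : Rˣ) * (c : R) * α)))
      + gsym f i j (oneAddEps R α) (cU d)
      + gsym f i j (oneAddEps R α) (oneAddEps R (-((d⁻¹ : Rˣ) * (c : R) * α))) = 0 := by
  set β : R := -((d⁻¹ : Rˣ) * (c : R) * α) with hβ
  have hdinv : ((d⁻¹ : Rˣ) : R) * (d : R) = 1 := by simp
  have hst : gsym f i j (cU c * oneAddEps R α) (cU d * oneAddEps R β) = 0 := by
    refine gsym_steinberg hij ?_
    rw [cU_mul_oneAddEps_val, cU_mul_oneAddEps_val]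
    have h1 : (c : R) * α + (d : R) * β = 0 := by
      rw [hβ]; linear_combination (-((c : R) * α)) * hdinv
    calc inl ↑c + inr (↑c * α) + (inl ↑d + inr (↑d * β))
        = inl ((c : R) + d) + inr ((c : R) * α + (d : R) * β) := by
          rw [inl_add, inr_add]; abel
      _ = 1 := by rw [hcd, h1, inr_zero, add_zero, inl_one]
  have hcc : gsym f i j (cU c) (cU d) = 0 := by
    refine gsym_steinberg hij ?_
    rw [cU_val, cU_val, ← inl_add, hcd, inl_one]
  rw [gsym_mul_left hij, gsym_mul_right hij, gsym_mul_right hij, hcc] at hst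
  abel_nf at hst ⊢
  exact hst

end TwoSlot
section Stab

variable {R : Type*} [CommRing R]

lemma exists_sum_units (hst : WeaklyStable R 5) (a : R) :
    ∃ u v : Rˣ, (u : R) + (v : R) = a := by
  obtain ⟨w, hw⟩ := hst (fun _ => -a)
  obtain ⟨v, hv⟩ := hw 0
  refine ⟨w, -v, ?_⟩
  rw [Units.val_neg, hv]
  ring

lemma exists_factor (hst : WeaklyStable R 5) (u : Rˣ) :
    ∃ d₁ d₂ : Rˣ, IsUnit ((1 : R) - (d₁ : R)) ∧ IsUnit ((1 : R) - (d₂ : R)) ∧ d₁ * d₂ = u := by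
  obtain ⟨w, hw⟩ := hst ![-1, -(u : R), -1, -(u : R)]
  have h1 : IsUnit ((-1 : R) + w) := by simpa using hw 0
  have h2 : IsUnit (-(u : R) + (w : R)) := by simpa using hw 1
  refine ⟨w, w⁻¹ * u, ?_, ?_, ?_⟩
  · have : (1 : R) - w = -((-1 : R) + w) := by ring
    rw [this]
    exact h1.neg
  · have h3 : (1 : R) - ((w⁻¹ * u : Rˣ) : R) = (w⁻¹ : Rˣ) * (-(u : R) + (w : R)) := by
      push_cast
      have hw1 : ((w⁻¹ : Rˣ) : R) * (w : R) = 1 := by simp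
      linear_combination -hw1
    rw [h3]
    exact (Units.isUnit w⁻¹).mul h2
  · rw [← mul_assoc, mul_inv_cancel, one_mul]

end Stab

section Core

variable {R : Type*} [CommRing R] {m : ℕ} {f : Fin m → (DualNumber R)ˣ} {i j : Fin m}

lemma S_cd (hij : (i : ℕ) + 1 = (j : ℕ)) (c d : Rˣ) (hcd : (c : R) + (d : R) = 1) (x y : R) :
    gsym f i j (oneAddEps R x) (oneAddEps R (-((d⁻¹ : Rˣ) * (c : R) * y)))
      + gsym f i j (oneAddEps R y) (oneAddEps R (-((d⁻¹ : Rˣ) * (c : R) * x))) = 0 := by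
  set a : R := -((d⁻¹ : Rˣ) * (c : R) * x) with ha
  set b : R := -((d⁻¹ : Rˣ) * (c : R) * y) with hb
  have e1 := gA (f := f) hij c d hcd (x + y)
  have hab : -(((d⁻¹ : Rˣ) : R) * (c : R) * (x + y)) = a + b := by rw [ha, hb]; ring
  rw [hab] at e1
  have e2 := gA (f := f) hij c d hcd x
  have e3 := gA (f := f) hij c d hcd y
  rw [← ha] at e2
  rw [← hb] at e3
  linear_combination (norm := abel) e1 - e2 - e3
    - gsym_E_add_right (f := f) hij (cU c) a b
    - gsym_E_add_left (f := f) hij x y (cU d)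
    - gsym_E_add_left (f := f) hij x y (oneAddEps R (a + b))
    - gsym_E_add_right (f := f) hij (oneAddEps R x) a b
    - gsym_E_add_right (f := f) hij (oneAddEps R y) a b

lemma S_lam (hij : (i : ℕ) + 1 = (j : ℕ)) (lam : Rˣ) (h1 : IsUnit ((1 : R) - (lam : R)))
    (x y : R) :
    gsym f i j (oneAddEps R x) (oneAddEps R ((lam : R) * y))
      + gsym f i j (oneAddEps R y) (oneAddEps R ((lam : R) * x)) = 0 := by
  obtain ⟨e, he⟩ := h1
  have he' : ((e⁻¹ : Rˣ) : R) * (e : R) = 1 := by simp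
  have he'' : ((e : Rˣ) : R) * ((e⁻¹ : Rˣ) : R) = 1 := by simp
  have hcd : ((-(lam * e⁻¹) : Rˣ) : R) + ((e⁻¹ : Rˣ) : R) = 1 := by
    push_cast
    linear_combination he' - ((e⁻¹ : Rˣ) : R) * he
  have hform : ∀ z : R, -(((e⁻¹ : Rˣ)⁻¹ : Rˣ) * ((-(lam * e⁻¹) : Rˣ) : R) * z) = (lam : R) * z := by
    intro z
    rw [inv_inv]
    push_cast
    linear_combination ((lam : R) * z) * he''
  have h := S_cd (f := f) hij (-(lam * e⁻¹)) e⁻¹ hcd x y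
  rw [hform x, hform y] at h
  exact h

lemma Z_lam [Invertible (2 : R)] (hij : (i : ℕ) + 1 = (j : ℕ)) (lam : Rˣ)
    (h1 : IsUnit ((1 : R) - (lam : R))) (x : R) :
    gsym f i j (oneAddEps R x) (oneAddEps R ((lam : R) * x)) = 0 := by
  set γ : R := (⅟2 : R) * x with hγ
  have hx : x = γ + γ := by rw [hγ, ← two_mul, ← mul_assoc, mul_invOf_self, one_mul]
  have h2 := S_lam (f := f) hij lam h1 γ γ
  rw [hx]
  have hmul : (lam : R) * (γ + γ) = (lam : R) * γ + (lam : R) * γ := by ring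
  rw [hmul]
  linear_combination (norm := abel)
    gsym_E_add_left (f := f) hij γ γ (oneAddEps R ((lam : R) * γ + (lam : R) * γ))
    + gsym_E_add_right (f := f) hij (oneAddEps R γ) ((lam : R) * γ) ((lam : R) * γ)
    + gsym_E_add_right (f := f) hij (oneAddEps R γ) ((lam : R) * γ) ((lam : R) * γ)
    + h2 + h2

lemma SW [Invertible (2 : R)] (hij : (i : ℕ) + 1 = (j : ℕ)) (c d : Rˣ)
    (hcd : (c : R) + (d : R) = 1) (α : R) :
    gsym f i j (oneAddEps R α) (cU d)
      = -gsym f i j (cU c) (oneAddEps R (-((d⁻¹ : Rˣ) * (c : R) * α))) := by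
  have e := gA (f := f) hij c d hcd α
  have hdinv : ((d⁻¹ : Rˣ) : R) * (d : R) = 1 := by simp
  have hz : gsym f i j (oneAddEps R α) (oneAddEps R (-((d⁻¹ : Rˣ) * (c : R) * α))) = 0 := by
    have hform : -(((d⁻¹ : Rˣ) : R) * (c : R) * α) = ((-(d⁻¹ * c) : Rˣ) : R) * α := by
      push_cast; ring
    have hu : IsUnit ((1 : R) - ((-(d⁻¹ * c) : Rˣ) : R)) := by
      have : (1 : R) - ((-(d⁻¹ * c) : Rˣ) : R) = ((d⁻¹ : Rˣ) : R) := by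
        push_cast
        linear_combination ((d⁻¹ : Rˣ) : R) * hcd - hdinv -- guess
      rw [this]
      exact Units.isUnit _
    rw [hform]
    exact Z_lam hij (-(d⁻¹ * c)) hu α
  linear_combination (norm := abel) e - hz

lemma B_antisym [Invertible (2 : R)] (hij : (i : ℕ) + 1 = (j : ℕ)) (x y : R) :
    gsym f i j (oneAddEps R x) (oneAddEps R y)
      = -gsym f i j (oneAddEps R y) (oneAddEps R x) := by
  have hu : IsUnit ((1 : R) - ((-1 : Rˣ) : R)) := by
    have : (1 : R) - ((-1 : Rˣ) : R) = 2 := by push_cast; ring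
    rw [this]
    exact isUnit_of_invertible 2
  have h := S_lam (f := f) hij (-1) hu x y
  have hn : ∀ z : R, ((-1 : Rˣ) : R) * z = -z := by intro z; push_cast; ring
  rw [hn x, hn y, gsym_E_neg_right hij, gsym_E_neg_right hij] at h
  linear_combination (norm := abel) -h

lemma T_lam [Invertible (2 : R)] (hij : (i : ℕ) + 1 = (j : ℕ)) (lam : Rˣ)
    (h1 : IsUnit ((1 : R) - (lam : R))) (x y : R) :
    gsym f i j (oneAddEps R ((lam : R) * x)) (oneAddEps R y)
      = gsym f i j (oneAddEps R x) (oneAddEps R ((lam : R) * y)) := by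
  have h := S_lam (f := f) hij lam h1 x y
  have h2 := B_antisym (f := f) hij y ((lam : R) * x)
  linear_combination (norm := abel) h2 - h

lemma T_unit [Invertible (2 : R)] (hst : WeaklyStable R 5) (hij : (i : ℕ) + 1 = (j : ℕ))
    (u : Rˣ) (x y : R) :
    gsym f i j (oneAddEps R ((u : R) * x)) (oneAddEps R y)
      = gsym f i j (oneAddEps R x) (oneAddEps R ((u : R) * y)) := by
  obtain ⟨d₁, d₂, h1, h2, hu⟩ := exists_factor hst u
  have hx : (u : R) * x = (d₁ : R) * ((d₂ : R) * x) := by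
    rw [← hu]; push_cast; ring
  have hy : (u : R) * y = (d₂ : R) * ((d₁ : R) * y) := by
    rw [← hu]; push_cast; ring
  rw [hx, hy, T_lam hij d₁ h1, T_lam hij d₂ h2]

lemma T_elem [Invertible (2 : R)] (hst : WeaklyStable R 5) (hij : (i : ℕ) + 1 = (j : ℕ))
    (a x y : R) :
    gsym f i j (oneAddEps R (a * x)) (oneAddEps R y)
      = gsym f i j (oneAddEps R x) (oneAddEps R (a * y)) := by
  obtain ⟨u, v, huv⟩ := exists_sum_units hst a
  have hx : a * x = (u : R) * x + (v : R) * x := by rw [← huv]; ring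
  have hy : a * y = (u : R) * y + (v : R) * y := by rw [← huv]; ring
  rw [hx, hy, gsym_E_add_left hij, gsym_E_add_right hij,
    T_unit hst hij u, T_unit hst hij v]

/-- KEY: any symbol with `1 + sε`, `1 + tε` in adjacent slots vanishes. -/
lemma adj_vanish [Invertible (2 : R)] (hst : WeaklyStable R 5)
    (hij : (i : ℕ) + 1 = (j : ℕ)) (s t : R) :
    gsym f i j (oneAddEps R s) (oneAddEps R t) = 0 := by
  have hA : ∀ p q : R, gsym f i j (oneAddEps R p) (oneAddEps R q)
      = gsym f i j (oneAddEps R 1) (oneAddEps R (p * q)) := by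
    intro p q
    have h := T_elem (f := f) hst hij p 1 q
    rwa [mul_one] at h
  have h2z : ∀ z : R, gsym f i j (oneAddEps R 1) (oneAddEps R z)
      + gsym f i j (oneAddEps R 1) (oneAddEps R z) = 0 := by
    intro z
    have h1 := hA 1 z
    rw [one_mul] at h1
    -- h1 : B 1 z = B 1 z, trivial; instead use pair (z, 1):
    have h2 := hA z 1
    rw [mul_one] at h2
    -- B z 1 = B 1 z
    have h3 := B_antisym (f := f) hij z 1
    -- B z 1 = - B 1 z
    linear_combination (norm := abel) h3 - h2
  set w : R := (⅟2 : R) * (s * t) with hw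
  have hst2 : s * t = w + w := by rw [hw, ← two_mul, ← mul_assoc, mul_invOf_self, one_mul]
  rw [hA s t, hst2, gsym_E_add_right hij]
  exact h2z w

end Core
section Master

variable {R : Type*} [CommRing R] {m : ℕ}

lemma unit_decomp (u : (DualNumber R)ˣ) :
    ∃ (c : Rˣ) (t : R), u = cU c * oneAddEps R t := by
  have hfst : IsUnit (fst (u : DualNumber R)) := by
    refine ⟨Units.map (TrivSqZeroExt.fstHom R R R).toRingHom.toMonoidHom u, rfl⟩
  obtain ⟨c, hc⟩ := hfst
  refine ⟨c, ((c⁻¹ : Rˣ) : R) * snd (u : DualNumber R), Units.ext ?_⟩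
  rw [cU_mul_oneAddEps_val]
  have h1 : (c : R) * (((c⁻¹ : Rˣ) : R) * snd (u : DualNumber R)) = snd (u : DualNumber R) := by
    rw [← mul_assoc]
    simp
  rw [h1, hc, inl_fst_add_inr_snd_eq]

lemma master_vanish [Invertible (2 : R)] (hst : WeaklyStable R 5) :
    ∀ (d : ℕ) (f : Fin m → (DualNumber R)ˣ) (i j : Fin m),
      (i : ℕ) + 1 + d = (j : ℕ) → ∀ s t : R,
      gsym f i j (oneAddEps R s) (oneAddEps R t) = 0 := by
  intro d
  induction d with
  | zero =>
    intro f i j hij s t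
    exact adj_vanish hst (by omega) s t
  | succ d IH =>
    intro f i j hij s t
    have hjm : (j : ℕ) < m := j.isLt
    set p : Fin m := ⟨(i : ℕ) + 1, by omega⟩ with hp
    have hip : (i : ℕ) + 1 = (p : ℕ) := rfl
    have hpj : (p : ℕ) + 1 + d = (j : ℕ) := by show (i : ℕ) + 1 + 1 + d = (j : ℕ); omega
    have hij' : i ≠ j := by intro h; subst h; omega
    have hinep : i ≠ p := by
      intro h; have h2 : (i : ℕ) = (i : ℕ) + 1 := congrArg Fin.val h; omega
    have hpnej : p ≠ j := by
      intro h; have h2 : (i : ℕ) + 1 = (j : ℕ) := congrArg Fin.val h; omega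
    obtain ⟨c, r, hc⟩ := unit_decomp (f p)
    -- the symbol as an update of slot p
    have hFp : (Function.update (Function.update f i (oneAddEps R s)) j (oneAddEps R t)) p
        = f p := by
      rw [Function.update_of_ne hpnej, Function.update_of_ne (Ne.symm hinep)]
    have hsplit : gsym f i j (oneAddEps R s) (oneAddEps R t)
        = milnorSymbol (Function.update
            (Function.update (Function.update f i (oneAddEps R s)) j (oneAddEps R t)) p
            (cU c))
          + milnorSymbol (Function.update
            (Function.update (Function.update f i (oneAddEps R s)) j (oneAddEps R t)) p
            (oneAddEps R r)) := by
      have := symbol_rel_mul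
        (Function.update (Function.update f i (oneAddEps R s)) j (oneAddEps R t)) p
        (cU c) (oneAddEps R r)
      rw [← hc] at this
      have heq : Function.update
          (Function.update (Function.update f i (oneAddEps R s)) j (oneAddEps R t)) p (f p)
          = Function.update (Function.update f i (oneAddEps R s)) j (oneAddEps R t) := by
        rw [← hFp]; exact Function.update_eq_self _ _
      rw [heq] at this
      exact this
    -- second term is an adjacent two-eps symbol, hence 0
    have hterm2 : milnorSymbol (Function.update
        (Function.update (Function.update f i (oneAddEps R s)) j (oneAddEps R t)) p
        (oneAddEps R r)) = 0 := by
      have heq : Function.update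
          (Function.update (Function.update f i (oneAddEps R s)) j (oneAddEps R t)) p
          (oneAddEps R r)
          = Function.update (Function.update (Function.update f j (oneAddEps R t)) i
              (oneAddEps R s)) p (oneAddEps R r) := by
        rw [Function.update_comm hij' (oneAddEps R s) (oneAddEps R t) f]
      rw [heq]
      exact adj_vanish hst hip s r
    -- first term: swap the eps from slot i past the constant at slot p
    have hterm1 : milnorSymbol (Function.update
        (Function.update (Function.update f i (oneAddEps R s)) j (oneAddEps R t)) p
        (cU c)) = 0 := by
      rw [Function.update_comm hij' (oneAddEps R s) (oneAddEps R t) f]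
      change gsym (Function.update f j (oneAddEps R t)) i p (oneAddEps R s) (cU c) = 0
      obtain ⟨d₁, d₂, h1, h2, hfac⟩ := exists_factor hst c
      have hsw : ∀ (dd : Rˣ), IsUnit ((1 : R) - (dd : R)) →
          gsym (Function.update f j (oneAddEps R t)) i p (oneAddEps R s) (cU dd) = 0 := by
        intro dd hdd
        have hcd : ((hdd.unit : Rˣ) : R) + (dd : R) = 1 := by
          rw [IsUnit.unit_spec]; ring
        rw [SW hip hdd.unit dd hcd s, neg_eq_zero]
        show milnorSymbol (Function.update (Function.update
            (Function.update f j (oneAddEps R t)) i (cU hdd.unit)) p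
            (oneAddEps R (-((dd⁻¹ : Rˣ) * ((hdd.unit : Rˣ) : R) * s)))) = 0
        rw [Function.update_comm (Ne.symm hij') (oneAddEps R t) (cU hdd.unit) f,
          Function.update_comm (show j ≠ p from Ne.symm hpnej) (oneAddEps R t)
            (oneAddEps R (-((dd⁻¹ : Rˣ) * ((hdd.unit : Rˣ) : R) * s)))
            (Function.update f i (cU hdd.unit))]
        exact IH (Function.update f i (cU hdd.unit)) p j hpj _ t
      have hc2 : cU c = cU d₁ * cU d₂ := by rw [← hfac, cU_mul]
      rw [hc2, gsym_mul_right hip, hsw d₁ h1, hsw d₂ h2, add_zero]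
    rw [hsplit, hterm1, hterm2, add_zero]

end Master
section Expand

variable {R : Type*} [CommRing R] {m : ℕ}

lemma update_congr {α β : Type*} [DecidableEq α] {f g : α → β} (k : α) (v : β)
    (h : ∀ i, i ≠ k → f i = g i) : Function.update f k v = Function.update g k v := by
  funext i
  rcases eq_or_ne i k with rfl | hi
  · simp
  · rw [Function.update_of_ne hi, Function.update_of_ne hi, h i hi]

lemma two_eps_vanish [Invertible (2 : R)] (hst : WeaklyStable R 5)
    (f : Fin m → (DualNumber R)ˣ) (k p : Fin m) (hkp : k ≠ p) (s t : R) :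
    milnorSymbol (Function.update (Function.update f k (oneAddEps R s)) p
      (oneAddEps R t)) = 0 := by
  have hv : (k : ℕ) ≠ (p : ℕ) := fun h => hkp (Fin.ext h)
  rcases lt_or_gt_of_ne hv with h | h
  · exact master_vanish hst ((p : ℕ) - (k : ℕ) - 1) f k p (by omega) s t
  · rw [Function.update_comm hkp (oneAddEps R s) (oneAddEps R t) f]
    exact master_vanish hst ((k : ℕ) - (p : ℕ) - 1) f p k (by omega) t s

lemma base_update_const (c : Fin m → Rˣ) (t : Fin m → R) (p : Fin m) (x : R) :
    Function.update (fun i => cU (c i) * oneAddEps R (x * t i)) p (cU (c p))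
      = fun i => cU (c i) * oneAddEps R (x * Function.update t p 0 i) := by
  funext i
  rcases eq_or_ne i p with rfl | hip
  · rw [Function.update_self, Function.update_self, mul_zero, oneAddEps_zero, mul_one]
  · rw [Function.update_of_ne hip, Function.update_of_ne hip]

/-- Single-ε additivity in the scaling parameter, with arbitrary slots. -/
lemma SL [Invertible (2 : R)] (hst : WeaklyStable R 5) :
    ∀ (l : ℕ) (c : Fin m → Rˣ) (t : Fin m → R) (k : Fin m) (τ : R),
    (∀ i : Fin m, l ≤ (i : ℕ) → i ≠ k → t i = 0) → ∀ a b : R,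
    milnorSymbol (Function.update (fun i => cU (c i) * oneAddEps R ((a + b) * t i)) k
        (oneAddEps R ((a + b) * τ)))
      = milnorSymbol (Function.update (fun i => cU (c i) * oneAddEps R (a * t i)) k
          (oneAddEps R (a * τ)))
        + milnorSymbol (Function.update (fun i => cU (c i) * oneAddEps R (b * t i)) k
          (oneAddEps R (b * τ))) := by
  intro l
  induction l with
  | zero =>
    intro c t k τ hcond a b
    have hb : ∀ x : R, Function.update (fun i => cU (c i) * oneAddEps R (x * t i)) k
        (oneAddEps R (x * τ))
        = Function.update (fun i => cU (c i)) k (oneAddEps R (x * τ)) := by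
      intro x
      refine update_congr k _ fun i hik => ?_
      rw [hcond i (Nat.zero_le _) hik, mul_zero, oneAddEps_zero, mul_one]
    rw [hb, hb, hb, add_mul]
    exact symbol_E_add _ k (a * τ) (b * τ)
  | succ l IH =>
    intro c t k τ hcond a b
    by_cases hlm : l < m
    · set p : Fin m := ⟨l, hlm⟩ with hp
      by_cases hpk : p = k
      · refine IH c t k τ (fun i hi hik => ?_) a b
        rcases Nat.eq_or_lt_of_le hi with he | hlt
        · exact absurd (hpk ▸ Fin.ext he.symm : i = k) hik
        · exact hcond i (by omega) hik
      · by_cases htp : t p = 0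
        · refine IH c t k τ (fun i hi hik => ?_) a b
          rcases Nat.eq_or_lt_of_le hi with he | hlt
          · rw [(Fin.ext he.symm : i = p)]; exact htp
          · exact hcond i (by omega) hik
        · set t' : Fin m → R := Function.update t p 0 with ht'
          have hcond' : ∀ i : Fin m, l ≤ (i : ℕ) → i ≠ k → t' i = 0 := by
            intro i hi hik
            rcases eq_or_ne i p with rfl | hip
            · rw [ht', Function.update_self]
            · rw [ht', Function.update_of_ne hip]
              rcases Nat.eq_or_lt_of_le hi with he | hlt
              · exact absurd (Fin.ext he.symm : i = p) hip
              · exact hcond i (by omega) hik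
          have hsplit : ∀ x : R,
              milnorSymbol (Function.update (fun i => cU (c i) * oneAddEps R (x * t i)) k
                (oneAddEps R (x * τ)))
              = milnorSymbol (Function.update (fun i => cU (c i) * oneAddEps R (x * t' i)) k
                  (oneAddEps R (x * τ)))
                + milnorSymbol (Function.update (Function.update
                    (fun i => cU (c i) * oneAddEps R (x * t' i)) k
                    (oneAddEps R (x * τ))) p (oneAddEps R (x * t p))) := by
            intro x
            set G : Fin m → (DualNumber R)ˣ :=
              Function.update (fun i => cU (c i) * oneAddEps R (x * t i)) k
                (oneAddEps R (x * τ)) with hG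
            have hGp : G p = cU (c p) * oneAddEps R (x * t p) := by
              rw [hG, Function.update_of_ne hpk]
            have h1 : milnorSymbol G
                = milnorSymbol (Function.update G p (cU (c p)))
                  + milnorSymbol (Function.update G p (oneAddEps R (x * t p))) := by
              have h2 := symbol_rel_mul G p (cU (c p)) (oneAddEps R (x * t p))
              rw [← hGp, Function.update_eq_self] at h2
              exact h2
            have e1 : Function.update G p (cU (c p))
                = Function.update (fun i => cU (c i) * oneAddEps R (x * t' i)) k
                    (oneAddEps R (x * τ)) := by
              rw [hG, Function.update_comm (Ne.symm hpk) (oneAddEps R (x * τ)) (cU (c p))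
                (fun i => cU (c i) * oneAddEps R (x * t i))]
              rw [show Function.update (fun i => cU (c i) * oneAddEps R (x * t i)) p (cU (c p))
                  = fun i => cU (c i) * oneAddEps R (x * t' i) from base_update_const c t p x]
            have e2 : Function.update G p (oneAddEps R (x * t p))
                = Function.update (Function.update
                    (fun i => cU (c i) * oneAddEps R (x * t' i)) k
                    (oneAddEps R (x * τ))) p (oneAddEps R (x * t p)) := by
              refine update_congr p _ fun i hip => ?_
              rcases eq_or_ne i k with rfl | hik
              · rw [hG, Function.update_self, Function.update_self]
              · rw [hG, Function.update_of_ne hik, Function.update_of_ne hik]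
                have : t' i = t i := by rw [ht', Function.update_of_ne hip]
                rw [this]
            rw [h1, e1, e2]
          have hvan : ∀ x : R,
              milnorSymbol (Function.update (Function.update
                  (fun i => cU (c i) * oneAddEps R (x * t' i)) k
                  (oneAddEps R (x * τ))) p (oneAddEps R (x * t p))) = 0 := fun x =>
            two_eps_vanish hst _ k p (Ne.symm hpk) _ _
          have hIH := IH c t' k τ hcond' a b
          rw [hsplit (a + b), hsplit a, hsplit b, hvan (a + b), hvan a, hvan b]
          rw [add_zero, add_zero, add_zero]
          exact hIH
    · refine IH c t k τ (fun i hi hik => ?_) a b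
      exact absurd hi (by have := i.isLt; omega)

end Expand
section MainAdd

variable {R : Type*} [CommRing R] {m : ℕ}

/-- Distributivity identity on explicitly decomposed symbols. -/
lemma ML [Invertible (2 : R)] (hst : WeaklyStable R 5) :
    ∀ (l : ℕ) (c : Fin m → Rˣ) (t : Fin m → R),
    (∀ i : Fin m, l ≤ (i : ℕ) → t i = 0) → ∀ a b : R,
    milnorSymbol (fun i => cU (c i) * oneAddEps R ((a + b) * t i))
      + milnorSymbol (fun i => cU (c i) * oneAddEps R ((0 : R) * t i))
      = milnorSymbol (fun i => cU (c i) * oneAddEps R (a * t i))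
        + milnorSymbol (fun i => cU (c i) * oneAddEps R (b * t i)) := by
  intro l
  induction l with
  | zero =>
    intro c t hcond a b
    have hb : ∀ x : R, (fun i => cU (c i) * oneAddEps R (x * t i))
        = fun i => (cU (c i) : (DualNumber R)ˣ) := by
      intro x
      funext i
      rw [hcond i (Nat.zero_le _), mul_zero, oneAddEps_zero, mul_one]
    rw [hb, hb, hb, hb]
  | succ l IH =>
    intro c t hcond a b
    by_cases hlm : l < m
    · set p : Fin m := ⟨l, hlm⟩ with hp
      by_cases htp : t p = 0
      · refine IH c t (fun i hi => ?_) a b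
        rcases Nat.eq_or_lt_of_le hi with he | hlt
        · rw [(Fin.ext he.symm : i = p)]; exact htp
        · exact hcond i (by omega)
      · set t' : Fin m → R := Function.update t p 0 with ht'
        have hcond' : ∀ i : Fin m, l ≤ (i : ℕ) → t' i = 0 := by
          intro i hi
          rcases eq_or_ne i p with rfl | hip
          · rw [ht', Function.update_self]
          · rw [ht', Function.update_of_ne hip]
            rcases Nat.eq_or_lt_of_le hi with he | hlt
            · exact absurd (Fin.ext he.symm : i = p) hip
            · exact hcond i (by omega)
        have hcondSL : ∀ i : Fin m, l ≤ (i : ℕ) → i ≠ p → t' i = 0 :=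
          fun i hi _ => hcond' i hi
        have hsplit : ∀ x : R,
            milnorSymbol (fun i => cU (c i) * oneAddEps R (x * t i))
            = milnorSymbol (fun i => cU (c i) * oneAddEps R (x * t' i))
              + milnorSymbol (Function.update (fun i => cU (c i) * oneAddEps R (x * t' i)) p
                  (oneAddEps R (x * t p))) := by
          intro x
          have h1 := symbol_rel_mul (fun i => cU (c i) * oneAddEps R (x * t i)) p
            (cU (c p)) (oneAddEps R (x * t p))
          have h2 : Function.update (fun i => cU (c i) * oneAddEps R (x * t i)) p
              (cU (c p) * oneAddEps R (x * t p))
              = fun i => cU (c i) * oneAddEps R (x * t i) :=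
            Function.update_eq_self _ _
          rw [h2, base_update_const c t p x] at h1
          have h3 : Function.update (fun i => cU (c i) * oneAddEps R (x * t i)) p
              (oneAddEps R (x * t p))
              = Function.update (fun i => cU (c i) * oneAddEps R (x * t' i)) p
                (oneAddEps R (x * t p)) := by
            refine update_congr p _ fun i hip => ?_
            have : t' i = t i := by rw [ht', Function.update_of_ne hip]
            rw [this]
          rw [h3] at h1
          exact h1
        have hSL := SL hst l c t' p (t p) hcondSL a b
        have hzero : milnorSymbol (Function.update
            (fun i => cU (c i) * oneAddEps R ((0 : R) * t' i)) p
            (oneAddEps R ((0 : R) * t p))) = 0 := by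
          refine symbol_one (i := p) ?_
          rw [Function.update_self, zero_mul, oneAddEps_zero]
        have hIH := IH c t' hcond' a b
        rw [hsplit (a + b), hsplit 0, hsplit a, hsplit b]
        linear_combination (norm := abel) hIH + hSL + hzero
    · refine IH c t (fun i hi => ?_) a b
      exact absurd hi (by have := i.isLt; omega)

end MainAdd
section MapLayer

variable {R : Type*} [CommRing R] {m : ℕ}

lemma map_symbol {S T : Type*} [CommRing S] [CommRing T] (φ : S →+* T) (f : Fin m → Sˣ) :
    MilnorK.map φ m (milnorSymbol f) = milnorSymbol (Units.map (φ : S →* T) ∘ f) := rfl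

lemma hom_eq_on {S A : Type*} [CommRing S] [AddCommGroup A]
    (g₁ g₂ : MilnorK S m →+ A)
    (h : ∀ f : Fin m → Sˣ, g₁ (milnorSymbol f) = g₂ (milnorSymbol f))
    (z : MilnorK S m) : g₁ z = g₂ z := by
  refine QuotientAddGroup.induction_on z fun y => ?_
  refine FreeAbelianGroup.induction_on y ?_ ?_ ?_ ?_
  · show g₁ (QuotientAddGroup.mk 0) = g₂ (QuotientAddGroup.mk 0)
    exact (map_zero g₁).trans (map_zero g₂).symm
  · exact h
  · intro x hx
    show g₁ (QuotientAddGroup.mk (-_)) = g₂ (QuotientAddGroup.mk (-_))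
    exact (map_neg g₁ (QuotientAddGroup.mk (FreeAbelianGroup.of x))).trans
      ((congrArg Neg.neg hx).trans (map_neg g₂ (QuotientAddGroup.mk (FreeAbelianGroup.of x))).symm)
  · intro x y hx hy
    show g₁ (QuotientAddGroup.mk (_ + _)) = g₂ (QuotientAddGroup.mk (_ + _))
    exact (map_add g₁ (QuotientAddGroup.mk x) (QuotientAddGroup.mk y)).trans
      ((congrArg₂ (· + ·) hx hy).trans
        (map_add g₂ (QuotientAddGroup.mk x) (QuotientAddGroup.mk y)).symm)

lemma map_comp_apply {S T U : Type*} [CommRing S] [CommRing T] [CommRing U]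
    (φ : S →+* T) (ψ : T →+* U) (z : MilnorK S m) :
    MilnorK.map (ψ.comp φ) m z = MilnorK.map ψ m (MilnorK.map φ m z) := by
  refine hom_eq_on (MilnorK.map (ψ.comp φ) m) ((MilnorK.map ψ m).comp (MilnorK.map φ m))
    (fun f => ?_) z
  rw [AddMonoidHom.comp_apply, map_symbol, map_symbol, map_symbol]
  rfl

lemma map_id_apply {S : Type*} [CommRing S] (z : MilnorK S m) :
    MilnorK.map (RingHom.id S) m z = z := by
  refine hom_eq_on (MilnorK.map (RingHom.id S) m) (AddMonoidHom.id _) (fun f => ?_) z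
  rw [map_symbol, AddMonoidHom.id_apply]
  rfl

@[simp] lemma epsScale_apply (a : R) (w : DualNumber R) :
    epsScale R a w = inl (fst w) + inr (a * snd w) := rfl

lemma epsScale_comp (x y : R) :
    (epsScale R x).comp (epsScale R y) = epsScale R (x * y) := by
  refine RingHom.ext fun w => ?_
  show epsScale R x (epsScale R y w) = epsScale R (x * y) w
  rw [epsScale_apply, epsScale_apply, epsScale_apply]
  simp [mul_assoc]

lemma epsScale_one : epsScale R 1 = RingHom.id (DualNumber R) := by
  refine RingHom.ext fun w => ?_
  rw [RingHom.id_apply, epsScale_apply, one_mul, inl_fst_add_inr_snd_eq]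

lemma epsScale_zero :
    epsScale R 0 = (algebraMap R (DualNumber R)).comp (TrivSqZeroExt.fstHom R R R).toRingHom := by
  refine RingHom.ext fun w => ?_
  rw [epsScale_apply, zero_mul, inr_zero, add_zero]
  rfl

lemma fst_comp_epsScale (a : R) :
    ((TrivSqZeroExt.fstHom R R R).toRingHom).comp (epsScale R a)
      = (TrivSqZeroExt.fstHom R R R).toRingHom := by
  refine RingHom.ext fun w => ?_
  show fst (epsScale R a w) = fst w
  rw [epsScale_apply]
  simp

lemma units_map_epsScale (x : R) (c : Rˣ) (t : R) :
    Units.map ((epsScale R x : DualNumber R →+* DualNumber R) : DualNumber R →* DualNumber R)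
      (cU c * oneAddEps R t) = cU c * oneAddEps R (x * t) := by
  refine Units.ext ?_
  show epsScale R x ((cU c * oneAddEps R t : (DualNumber R)ˣ) : DualNumber R) = _
  rw [cU_mul_oneAddEps_val, cU_mul_oneAddEps_val, epsScale_apply]
  simp only [fst_add, fst_inl, fst_inr, snd_add, snd_inl, snd_inr, add_zero, zero_add]
  rw [mul_left_comm]

/-- The main additivity: `σ_{a+b∗} + σ_{0∗} = σ_{a∗} + σ_{b∗}` on all of Milnor K. -/
lemma map_epsScale_add [Invertible (2 : R)] (hst : WeaklyStable R 5) (a b : R)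
    (z : MilnorK (DualNumber R) m) :
    MilnorK.map (epsScale R (a + b)) m z + MilnorK.map (epsScale R 0) m z
      = MilnorK.map (epsScale R a) m z + MilnorK.map (epsScale R b) m z := by
  refine hom_eq_on (MilnorK.map (epsScale R (a + b)) m + MilnorK.map (epsScale R 0) m)
    (MilnorK.map (epsScale R a) m + MilnorK.map (epsScale R b) m) (fun f => ?_) z
  simp only [AddMonoidHom.add_apply, map_symbol]
  choose cF tF hF using fun i => unit_decomp (f i)
  have hmap : ∀ x : R, (Units.map ((epsScale R x : DualNumber R →+* DualNumber R) :
      DualNumber R →* DualNumber R)) ∘ f = fun i => cU (cF i) * oneAddEps R (x * tF i) := by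
    intro x
    funext i
    rw [Function.comp_apply, hF i, units_map_epsScale]
  rw [hmap (a + b), hmap 0, hmap a, hmap b]
  exact ML hst m cF tF (fun i hi => absurd hi (by have := i.isLt; omega)) a b

end MapLayer
set_option synthInstance.maxHeartbeats 1000000
set_option maxHeartbeats 1000000
section Assemble

variable {R : Type*} [CommRing R]

lemma ker_preserve {n : ℕ} (a : R)
    (x : MilnorK (DualNumber R) (n + 1))
    (hx : x ∈ (MilnorK.map (TrivSqZeroExt.fstHom R R R).toRingHom (n + 1)).ker) :
    MilnorK.map (epsScale R a) (n + 1) x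
      ∈ (MilnorK.map (TrivSqZeroExt.fstHom R R R).toRingHom (n + 1)).ker := by
  rw [AddMonoidHom.mem_ker] at hx ⊢
  rw [← map_comp_apply, fst_comp_epsScale, hx]

lemma ker_zero {n : ℕ}
    (x : MilnorK (DualNumber R) (n + 1))
    (hx : x ∈ (MilnorK.map (TrivSqZeroExt.fstHom R R R).toRingHom (n + 1)).ker) :
    MilnorK.map (epsScale R 0) (n + 1) x = 0 := by
  rw [AddMonoidHom.mem_ker] at hx
  rw [epsScale_zero, map_comp_apply, hx, map_zero]

/-- The action of `a : R` on the kernel. -/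
def actE (R : Type*) [CommRing R] (n : ℕ) (a : R) :
    AddMonoid.End ((MilnorK.map (TrivSqZeroExt.fstHom R R R).toRingHom (n + 1)).ker) :=
  AddMonoidHom.codRestrict
    ((MilnorK.map (epsScale R a) (n + 1)).comp
      (MilnorK.map (TrivSqZeroExt.fstHom R R R).toRingHom (n + 1)).ker.subtype)
    (MilnorK.map (TrivSqZeroExt.fstHom R R R).toRingHom (n + 1)).ker
    (fun x => ker_preserve a (x : MilnorK (DualNumber R) (n + 1)) x.2)

@[simp] lemma actE_coe (R : Type*) [CommRing R] (n : ℕ) (a : R)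
    (x : (MilnorK.map (TrivSqZeroExt.fstHom R R R).toRingHom (n + 1)).ker) :
    ((actE R n a x : (MilnorK.map (TrivSqZeroExt.fstHom R R R).toRingHom (n + 1)).ker) :
      MilnorK (DualNumber R) (n + 1))
    = MilnorK.map (epsScale R a) (n + 1) (x : MilnorK (DualNumber R) (n + 1)) := rfl

theorem stmt_19' (R : Type*) [CommRing R] [Invertible (2 : R)]
    (hst : WeaklyStable R 5) (n : ℕ) :
    ∃ ρ : R →+* AddMonoid.End
        ((MilnorK.map (TrivSqZeroExt.fstHom R R R).toRingHom (n + 1)).ker),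
      (∀ (a : R) (x : (MilnorK.map (TrivSqZeroExt.fstHom R R R).toRingHom (n + 1)).ker),
          ((ρ a x : (MilnorK.map (TrivSqZeroExt.fstHom R R R).toRingHom (n + 1)).ker) :
              MilnorK (DualNumber R) (n + 1))
            = MilnorK.map (epsScale R a) (n + 1) (x : MilnorK (DualNumber R) (n + 1))) ∧
      (∀ (a s : R) (r : Fin n → Rˣ),
          MilnorK.map (epsScale R a) (n + 1)
              (milnorSymbol (Fin.cons (oneAddEps R (s * ∏ i, (r i : R)))
                (fun i => Units.map (algebraMap R (DualNumber R)).toMonoidHom (r i))))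
            = milnorSymbol (Fin.cons (oneAddEps R (a * s * ∏ i, (r i : R)))
                (fun i => Units.map (algebraMap R (DualNumber R)).toMonoidHom (r i)))) := by
  refine ⟨{ toFun := actE R n
            map_one' := ?_
            map_mul' := ?_
            map_zero' := ?_
            map_add' := ?_ }, ?_, ?_⟩
  · refine AddMonoid.End.ext (h := fun x => Subtype.ext ?_)
    rw [actE_coe, epsScale_one, map_id_apply]
    rfl
  · intro a b
    refine AddMonoid.End.ext (h := fun x => Subtype.ext ?_)
    rw [actE_coe]
    show MilnorK.map (epsScale R (a * b)) (n + 1) (x : MilnorK (DualNumber R) (n + 1))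
      = ((actE R n a) ((actE R n b) x) : MilnorK (DualNumber R) (n + 1))
    rw [actE_coe, actE_coe, ← epsScale_comp, map_comp_apply]
  · refine AddMonoid.End.ext (h := fun x => Subtype.ext ?_)
    rw [actE_coe, ker_zero (x : MilnorK (DualNumber R) (n + 1)) x.2]
    rfl
  · intro a b
    refine AddMonoid.End.ext (h := fun x => Subtype.ext ?_)
    rw [actE_coe]
    show MilnorK.map (epsScale R (a + b)) (n + 1) (x : MilnorK (DualNumber R) (n + 1))
      = ((actE R n a x + actE R n b x :
          (MilnorK.map (TrivSqZeroExt.fstHom R R R).toRingHom (n + 1)).ker) :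
            MilnorK (DualNumber R) (n + 1))
    rw [AddSubgroup.coe_add, actE_coe, actE_coe]
    have h := map_epsScale_add hst a b (x : MilnorK (DualNumber R) (n + 1))
    rw [ker_zero (x : MilnorK (DualNumber R) (n + 1)) x.2, add_zero] at h
    exact h
  · intro a x
    rfl
  · intro a s r
    rw [map_symbol]
    congr 1
    funext i
    refine Fin.cases ?_ ?_ i
    · rw [Function.comp_apply, Fin.cons_zero, Fin.cons_zero]
      have h1 : oneAddEps R (s * ∏ i, (r i : R)) = cU 1 * oneAddEps R (s * ∏ i, (r i : R)) := by
        rw [show (cU 1 : (DualNumber R)ˣ) = 1 from Units.ext (by simp), one_mul]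
      rw [h1, units_map_epsScale]
      rw [show (cU 1 : (DualNumber R)ˣ) = 1 from Units.ext (by simp), one_mul, mul_assoc]
    · intro k
      rw [Function.comp_apply, Fin.cons_succ, Fin.cons_succ]
      show Units.map ((epsScale R a : DualNumber R →+* DualNumber R) :
          DualNumber R →* DualNumber R) (cU (r k)) = cU (r k)
      have h2 : (cU (r k) : (DualNumber R)ˣ) = cU (r k) * oneAddEps R 0 := by
        rw [oneAddEps_zero, mul_one]
      rw [h2, units_map_epsScale, mul_zero, oneAddEps_zero, mul_one]

end Assemble

set_option synthInstance.maxHeartbeats 1000000 in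
/-- for `R` containing `1/2` and weakly 5-fold stable, the assignment
`a ↦ (induced action of σ_a : ε ↦ a·ε)` defines an `R`-module structure (a ring
homomorphism `R → End(TK^M_{n+1}(R))`) on the kernel `TK^M_{n+1}(R)` of
`K^M_{n+1}(R[ε]) → K^M_{n+1}(R)`, acting on generators by
`a · {1 + s·r₁⋯r_n·ε, r₁, …, r_n} = {1 + a·s·r₁⋯r_n·ε, r₁, …, r_n}`. -/
theorem stmt_19 (R : Type*) [CommRing R] [Invertible (2 : R)]
    (hst : WeaklyStable R 5) (n : ℕ) :
    ∃ ρ : R →+* AddMonoid.End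
        ((MilnorK.map (TrivSqZeroExt.fstHom R R R).toRingHom (n + 1)).ker),
      (∀ (a : R) (x : (MilnorK.map (TrivSqZeroExt.fstHom R R R).toRingHom (n + 1)).ker),
          ((ρ a x : (MilnorK.map (TrivSqZeroExt.fstHom R R R).toRingHom (n + 1)).ker) :
              MilnorK (DualNumber R) (n + 1))
            = MilnorK.map (epsScale R a) (n + 1) (x : MilnorK (DualNumber R) (n + 1))) ∧
      (∀ (a s : R) (r : Fin n → Rˣ),
          MilnorK.map (epsScale R a) (n + 1)
              (milnorSymbol (Fin.cons (oneAddEps R (s * ∏ i, (r i : R)))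
                (fun i => Units.map (algebraMap R (DualNumber R)).toMonoidHom (r i))))
            = milnorSymbol (Fin.cons (oneAddEps R (a * s * ∏ i, (r i : R)))
                (fun i => Units.map (algebraMap R (DualNumber R)).toMonoidHom (r i)))) := by
  exact stmt_19' R hst n
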